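/- Let (S,F,L) be a p-local finite group and Γ = Γ_{p'}(F), with projection functor Θ̂ : L → B(Γ). Fix a subgroup H ≤ Γ and let ι : L_H → L be the inclusion of the index-prime-to-p subsystem. For an object P of L, let G_H(P) be the full subcategory of the under-category P ↓ ι whose objects are pairs (P^α, α) for isomorphisms α : P → P^α ≤ S in L. Then G_H(P) is a discrete groupoid and is a left deformation retract of P ↓ ι. -/

import Mathlib

open CategoryTheory

/-- Skeletal data of a (quasi)centric linking system of a `p`-local finite group, as used
in [Levi–Ragnarsson]: a small category `L` with distinguished object `S`, the projection
functor `Θ̂ : L ⥤ B(Γ)` onto (the one-object category of) the group `Γ = Γ_{p'}(F)`,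
an image factorization of every morphism into an isomorphism followed by an "inclusion"
(inclusions being collapsed to the identity by `Θ̂`), surjectivity of
`Aut_L(S) → Γ`, and restrictions of automorphisms of `S` to every object. -/
structure LinkingData (L : Type) [SmallCategory L] (Γ : Type) [Group Γ] where
  S : L
  Θ : L ⥤ SingleObj Γ
  im : ∀ {P Q : L}, (P ⟶ Q) → L
  restr : ∀ {P Q : L} (f : P ⟶ Q), P ⟶ im f
  incl : ∀ {P Q : L} (f : P ⟶ Q), im f ⟶ Q
  restr_isIso : ∀ {P Q : L} (f : P ⟶ Q), IsIso (restr f)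
  fac : ∀ {P Q : L} (f : P ⟶ Q), restr f ≫ incl f = f
  theta_incl : ∀ {P Q : L} (f : P ⟶ Q), (show Γ from Θ.map (incl f)) = 1
  im_of_isIso : ∀ {P Q : L} (f : P ⟶ Q), IsIso f → im f = Q
  incl_of_isIso : ∀ {P Q : L} (f : P ⟶ Q) (h : IsIso f), incl f = eqToHom (im_of_isIso f h)
  theta_surj : ∀ γ : Γ, ∃ e : S ⟶ S, IsIso e ∧ (show Γ from Θ.map e) = γ
  conjObj : Γ → L → L
  conjMor : ∀ (γ : Γ) (P : L), conjObj γ P ⟶ P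
  conjMor_isIso : ∀ (γ : Γ) (P : L), IsIso (conjMor γ P)
  theta_conjMor : ∀ (γ : Γ) (P : L), (show Γ from Θ.map (conjMor γ P)) = γ

variable {L : Type} [SmallCategory L] {Γ : Type} [Group Γ]

/-- The underlying type of the wide subcategory `L_H ⊆ L` of morphisms whose image under
`Θ̂` lies in the subgroup `H ≤ Γ`; this is the linking system of the subsystem of index
prime to `p` corresponding to `H`. -/
def LSub (_D : LinkingData L Γ) (_H : Subgroup Γ) : Type := L

instance LSub.category (D : LinkingData L Γ) (H : Subgroup Γ) : Category (LSub D H) where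
  Hom X Y := {f : (show L from X) ⟶ (show L from Y) // (show Γ from D.Θ.map f) ∈ H}
  id X := ⟨𝟙 (show L from X), by
    have : (show Γ from D.Θ.map (𝟙 (show L from X))) = 1 := by rw [D.Θ.map_id]; rfl
    rw [this]; exact H.one_mem⟩
  comp {X Y Z} f g := ⟨f.1 ≫ g.1, by
    have : (show Γ from D.Θ.map (f.1 ≫ g.1)) =
        (show Γ from D.Θ.map g.1) * (show Γ from D.Θ.map f.1) := by
      rw [D.Θ.map_comp]; rfl
    rw [this]; exact H.mul_mem g.2 f.2⟩
  id_comp f := by apply Subtype.ext; exact Category.id_comp f.1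
  comp_id f := by apply Subtype.ext; exact Category.comp_id f.1
  assoc f g h := by apply Subtype.ext; exact Category.assoc f.1 g.1 h.1

/-- The inclusion functor `ι : L_H ⥤ L`. -/
def LSub.ι (D : LinkingData L Γ) (H : Subgroup Γ) : LSub D H ⥤ L where
  obj X := X
  map f := f.1

namespace GH12Aux

variable (D : LinkingData L Γ) (H : Subgroup Γ)

lemma theta_comp {P Q R : L} (f : P ⟶ Q) (g : Q ⟶ R) :
    (show Γ from D.Θ.map (f ≫ g)) = (show Γ from D.Θ.map g) * (show Γ from D.Θ.map f) := by
  rw [D.Θ.map_comp]; rfl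

lemma theta_id (P : L) : (show Γ from D.Θ.map (𝟙 P)) = 1 := by
  rw [D.Θ.map_id]; rfl

lemma theta_inv {P Q : L} (e : P ⟶ Q) [IsIso e] :
    (show Γ from D.Θ.map (inv e)) = (show Γ from D.Θ.map e)⁻¹ := by
  apply eq_inv_of_mul_eq_one_left
  have : (show Γ from D.Θ.map (e ≫ inv e)) = 1 := by
    rw [IsIso.hom_inv_id]; exact theta_id D P
  rw [theta_comp] at this
  exact this

lemma theta_restr {P Q : L} (f : P ⟶ Q) :
    (show Γ from D.Θ.map (D.restr f)) = (show Γ from D.Θ.map f) := by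
  conv_rhs => rw [← D.fac f]
  rw [theta_comp, D.theta_incl, one_mul]

variable (P : L)

lemma hom_subsing (A B : StructuredArrow P (LSub.ι D H)) (hA : IsIso A.hom) :
    Subsingleton (A ⟶ B) := by
  constructor
  intro f g
  apply StructuredArrow.hom_ext
  apply Subtype.ext
  haveI := hA
  have hf : A.hom ≫ f.right.1 = B.hom := StructuredArrow.w f
  have hg : A.hom ≫ g.right.1 = B.hom := StructuredArrow.w g
  exact (cancel_epi A.hom).1 (hf.trans hg.symm)

/-- The retraction on objects. -/
def rObj (X : StructuredArrow P (LSub.ι D H)) :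
    ObjectProperty.FullSubcategory (fun X : StructuredArrow P (LSub.ι D H) => IsIso X.hom) :=
  ⟨StructuredArrow.mk
      (show P ⟶ (LSub.ι D H).obj (show LSub D H from D.im X.hom) from D.restr X.hom),
    D.restr_isIso X.hom⟩

/-- The retraction on morphisms. -/
noncomputable def rMap {X Y : StructuredArrow P (LSub.ι D H)} (φ : X ⟶ Y) :
    rObj D H P X ⟶ rObj D H P Y := by
  haveI := D.restr_isIso X.hom
  refine ObjectProperty.homMk (StructuredArrow.homMk
    (⟨inv (D.restr X.hom) ≫ D.restr Y.hom, ?_⟩ :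
      (show LSub D H from D.im X.hom) ⟶ (show LSub D H from D.im Y.hom)) ?_)
  · have hY : X.hom ≫ φ.right.1 = Y.hom := StructuredArrow.w φ
    have : (show Γ from D.Θ.map (inv (D.restr X.hom) ≫ D.restr Y.hom)) =
        (show Γ from D.Θ.map φ.right.1) := by
      have hc : (show Γ from D.Θ.map Y.hom) =
          (show Γ from D.Θ.map φ.right.1) * (show Γ from D.Θ.map X.hom) := by
        rw [← hY]; exact theta_comp D _ _
      rw [theta_comp, theta_inv, theta_restr, theta_restr, hc]
      group
    rw [this]; exact φ.right.2
  · show D.restr X.hom ≫ (inv (D.restr X.hom) ≫ D.restr Y.hom) = D.restr Y.hom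
    simp

/-- The retraction functor. -/
noncomputable def r : StructuredArrow P (LSub.ι D H) ⥤
    ObjectProperty.FullSubcategory (fun X : StructuredArrow P (LSub.ι D H) => IsIso X.hom) where
  obj := rObj D H P
  map := rMap D H P
  map_id X := ObjectProperty.hom_ext _ ((hom_subsing D H P _ _ (rObj D H P X).property).allEq _ _)
  map_comp _ _ := ObjectProperty.hom_ext _ ((hom_subsing D H P _ _ (rObj D H P _).property).allEq _ _)

lemma sa_ext {C E : Type*} [Category C] [Category E] {F : C ⥤ E} {P : E}
    (A B : StructuredArrow P F) (h : A.right = B.right)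
    (hh : A.hom ≫ eqToHom (congrArg F.obj h) = B.hom) : A = B := by
  obtain ⟨⟨⟨⟩⟩, rA, fA⟩ := A
  obtain ⟨⟨⟨⟩⟩, rB, fB⟩ := B
  change rA = rB at h
  subst h
  simp only [eqToHom_refl, Category.comp_id] at hh
  subst hh
  rfl

lemma fs_ext {C : Type*} [Category C] {Z : C → Prop} (A B : ObjectProperty.FullSubcategory Z)
    (h : A.obj = B.obj) : A = B := by
  cases A; cases B; cases h; rfl

lemma r_comp_id :
    ObjectProperty.ι (fun X : StructuredArrow P (LSub.ι D H) => IsIso X.hom) ⋙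
      r D H P = 𝟭 _ := by
  have hobj : ∀ X : ObjectProperty.FullSubcategory (fun X : StructuredArrow P (LSub.ι D H) => IsIso X.hom),
      (ObjectProperty.ι _ ⋙ r D H P).obj X = (𝟭 _).obj X := by
    intro X
    refine fs_ext _ _ ?_
    refine sa_ext _ _ (D.im_of_isIso X.obj.hom X.property) ?_
    show D.restr X.obj.hom ≫ _ = X.obj.hom
    conv_rhs => rw [← D.fac X.obj.hom]
    congr 1
    exact (D.incl_of_isIso X.obj.hom X.property).symm
  exact CategoryTheory.Functor.ext hobj
    (fun X Y f => ObjectProperty.hom_ext _ ((hom_subsing D H P _ _ (rObj D H P X.obj).property).allEq _ _))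

/-- The deformation. -/
noncomputable def η : r D H P ⋙
    ObjectProperty.ι (fun X : StructuredArrow P (LSub.ι D H) => IsIso X.hom) ⟶
    𝟭 (StructuredArrow P (LSub.ι D H)) where
  app X := StructuredArrow.homMk
    (⟨D.incl X.hom, by exact (congrArg (· ∈ H) (D.theta_incl X.hom)).mpr H.one_mem⟩ :
      (show LSub D H from D.im X.hom) ⟶ X.right)
    (D.fac X.hom)
  naturality X Y φ := (hom_subsing D H P _ _ (D.restr_isIso X.hom)).allEq _ _

end GH12Aux

/-- For an object `P` of `L`, let `G_H(P)` be the full subcategory of the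
under-category `P ↓ ι` (`ι : L_H ⥤ L` the inclusion of the subsystem of index prime to
`p`) on the objects `(Q, α)` with `α : P ⟶ Q` an isomorphism in `L`.  Then `G_H(P)` is a
discrete groupoid and a left deformation retract of `P ↓ ι`. -/
theorem GH_discrete_groupoid_and_deformation_retract
    (D : LinkingData L Γ) (H : Subgroup Γ) (P : L) :
    (∀ X Y : ObjectProperty.FullSubcategory
        (fun X : StructuredArrow P (LSub.ι D H) => IsIso X.hom),
      Subsingleton (X ⟶ Y) ∧ ∀ f : X ⟶ Y, IsIso f) ∧
    ∃ (r : StructuredArrow P (LSub.ι D H) ⥤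
        ObjectProperty.FullSubcategory (fun X : StructuredArrow P (LSub.ι D H) => IsIso X.hom))
      (h : ObjectProperty.ι _ ⋙ r = 𝟭 _)
      (η : r ⋙ ObjectProperty.ι _ ⟶ 𝟭 _),
      ∀ X : ObjectProperty.FullSubcategory (fun X : StructuredArrow P (LSub.ι D H) => IsIso X.hom),
        η.app ((ObjectProperty.ι _).obj X) =
          eqToHom (by
            simpa using
              congrArg (ObjectProperty.ι _).obj (Functor.congr_obj h X)) := by
  constructor
  · intro X Y
    haveI hs := GH12Aux.hom_subsing D H P X.obj Y.obj X.property
    refine ⟨⟨fun a b => ObjectProperty.hom_ext _ (hs.allEq _ _)⟩, fun f => ?_⟩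
    -- build an inverse
    haveI hX := X.property
    haveI hY := Y.property
    have hf : X.obj.hom ≫ f.hom.right.1 = Y.obj.hom := StructuredArrow.w f.hom
    have hmem : (show Γ from D.Θ.map (inv Y.obj.hom ≫ X.obj.hom)) =
        (show Γ from D.Θ.map f.hom.right.1)⁻¹ := by
      have hc : (show Γ from D.Θ.map Y.obj.hom) =
          (show Γ from D.Θ.map f.hom.right.1) * (show Γ from D.Θ.map X.obj.hom) := by
        rw [← hf]; exact GH12Aux.theta_comp D _ _
      rw [GH12Aux.theta_comp, GH12Aux.theta_inv, hc]
      group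
    refine ⟨ObjectProperty.homMk (StructuredArrow.homMk
      (⟨@inv _ _ _ _ Y.obj.hom hY ≫ X.obj.hom, by exact (congrArg (· ∈ H) hmem).mpr (H.inv_mem f.hom.right.2)⟩ :
        Y.obj.right ⟶ X.obj.right) ?_), ?_, ?_⟩
    · show Y.obj.hom ≫ (inv Y.obj.hom ≫ X.obj.hom) = X.obj.hom
      simp
    · exact ObjectProperty.hom_ext _ ((GH12Aux.hom_subsing D H P X.obj X.obj X.property).allEq _ _)
    · exact ObjectProperty.hom_ext _ ((GH12Aux.hom_subsing D H P Y.obj Y.obj Y.property).allEq _ _)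
  · refine ⟨GH12Aux.r D H P, GH12Aux.r_comp_id D H P, GH12Aux.η D H P, fun X => ?_⟩
    exact (GH12Aux.hom_subsing D H P _ _ (D.restr_isIso X.obj.hom)).allEq _ _
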